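/- arXiv:2202.13068 — 3 statements merged into one kernel-verified Lean document; each statement's English description precedes it below -/
import Mathlib

section
/- Let K : ℝ → ℝ be continuous, bounded, nonnegative, symmetric (K(−x)=K(x)), with K(0) > 0 and ∫_ℝ K = 1. Fix l > 0 and suppose θ* : [−l,l] → ℝ is continuous with θ*(x) > 0 on [−l,l] and ∫_{−l}^{l} K(x−y)θ*(y)dy = λ̃·θ*(x) for all x ∈ [−l,l], where λ̃ > 0. If α1 > λ̃ and θ2 : [−l,l] → ℝ is continuous and satisfies ∫_{−l}^{l} K(x−y)θ2(y)dy = α1·θ2(x) for all x ∈ [−l,l], then θ2 ≡ 0. -/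
theorem stmt_3 (K : ℝ → ℝ) (hKcont : Continuous K) (hKbdd : ∃ C : ℝ, ∀ x, |K x| ≤ C)
    (hKnonneg : ∀ x, 0 ≤ K x) (hKsymm : ∀ x, K (-x) = K x) (hK0 : 0 < K 0)
    (hKint : MeasureTheory.Integrable K) (hKone : ∫ x, K x = 1)
    (l : ℝ) (hl : 0 < l)
    (θstar : ℝ → ℝ) (hθcont : ContinuousOn θstar (Set.Icc (-l) l))
    (hθpos : ∀ x ∈ Set.Icc (-l) l, 0 < θstar x)
    (lamt : ℝ) (hlamt : 0 < lamt)
    (hθeig : ∀ x ∈ Set.Icc (-l) l, ∫ y in (-l)..l, K (x - y) * θstar y = lamt * θstar x)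
    (α1 : ℝ) (hα1 : lamt < α1)
    (θ2 : ℝ → ℝ) (hθ2cont : ContinuousOn θ2 (Set.Icc (-l) l))
    (hθ2eig : ∀ x ∈ Set.Icc (-l) l, ∫ y in (-l)..l, K (x - y) * θ2 y = α1 * θ2 x) :
    ∀ x ∈ Set.Icc (-l) l, θ2 x = 0 := by
  have hll : (-l : ℝ) ≤ l := by linarith
  have huIcc : Set.uIcc (-l) l = Set.Icc (-l) l := Set.uIcc_of_le hll
  intro x hx
  by_contra hne
  -- the ratio function
  set h : ℝ → ℝ := fun y => |θ2 y| / θstar y with hh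
  have hcomp : IsCompact (Set.Icc (-l) l) := isCompact_Icc
  have hne' : (Set.Icc (-l) l).Nonempty := ⟨x, hx⟩
  have hhcont : ContinuousOn h (Set.Icc (-l) l) :=
    (hθ2cont.abs).div hθcont (fun y hy => (hθpos y hy).ne')
  obtain ⟨x0, hx0, hmax⟩ := hcomp.exists_isMaxOn hne' hhcont
  have hmax' : ∀ y ∈ Set.Icc (-l) l, h y ≤ h x0 := hmax
  set M := h x0 with hM
  have hMpos : 0 < M := lt_of_lt_of_le
    (div_pos (abs_pos.mpr hne) (hθpos x hx)) (hmax' x hx)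
  have hbound : ∀ y ∈ Set.Icc (-l) l, |θ2 y| ≤ M * θstar y := by
    intro y hy
    have := hmax' y hy
    rw [hh] at this
    exact (div_le_iff₀ (hθpos y hy)).mp this
  have hθ2x0 : |θ2 x0| = M * θstar x0 := by
    rw [hM, hh]
    field_simp [(hθpos x0 hx0).ne']
  have hθ2x0pos : 0 < |θ2 x0| := by
    rw [hθ2x0]; exact mul_pos hMpos (hθpos x0 hx0)
  -- integrability
  have hKc : Continuous fun y => K (x0 - y) := hKcont.comp (continuous_const.sub continuous_id)
  have hint2 : IntervalIntegrable (fun y => K (x0 - y) * θ2 y) MeasureTheory.volume (-l) l := by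
    apply ContinuousOn.intervalIntegrable
    rw [huIcc]
    exact hKc.continuousOn.mul hθ2cont
  have hintabs : IntervalIntegrable (fun y => K (x0 - y) * |θ2 y|) MeasureTheory.volume (-l) l := by
    apply ContinuousOn.intervalIntegrable
    rw [huIcc]
    exact hKc.continuousOn.mul hθ2cont.abs
  have hintstar : IntervalIntegrable (fun y => K (x0 - y) * (M * θstar y)) MeasureTheory.volume (-l) l := by
    apply ContinuousOn.intervalIntegrable
    rw [huIcc]
    exact hKc.continuousOn.mul (continuousOn_const.mul hθcont)
  -- main estimate
  have key : α1 * |θ2 x0| ≤ lamt * |θ2 x0| := by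
    have h1 : α1 * |θ2 x0| = |∫ y in (-l)..l, K (x0 - y) * θ2 y| := by
      rw [hθ2eig x0 hx0, abs_mul, abs_of_pos (lt_trans hlamt hα1)]
    have h2 : |∫ y in (-l)..l, K (x0 - y) * θ2 y| ≤ ∫ y in (-l)..l, |K (x0 - y) * θ2 y| :=
      intervalIntegral.abs_integral_le_integral_abs hll
    have h3 : (∫ y in (-l)..l, |K (x0 - y) * θ2 y|) = ∫ y in (-l)..l, K (x0 - y) * |θ2 y| := by
      apply intervalIntegral.integral_congr
      intro y _
      show |K (x0 - y) * θ2 y| = K (x0 - y) * |θ2 y|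
      rw [abs_mul, abs_of_nonneg (hKnonneg _)]
    have h4 : (∫ y in (-l)..l, K (x0 - y) * |θ2 y|) ≤ ∫ y in (-l)..l, K (x0 - y) * (M * θstar y) := by
      apply intervalIntegral.integral_mono_on hll hintabs hintstar
      intro y hy
      exact mul_le_mul_of_nonneg_left (hbound y hy) (hKnonneg _)
    have h5 : (∫ y in (-l)..l, K (x0 - y) * (M * θstar y)) = M * ∫ y in (-l)..l, K (x0 - y) * θstar y := by
      rw [← intervalIntegral.integral_const_mul]
      apply intervalIntegral.integral_congr
      intro y _
      show K (x0 - y) * (M * θstar y) = M * (K (x0 - y) * θstar y)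
      ring
    have h6 : M * (∫ y in (-l)..l, K (x0 - y) * θstar y) = lamt * |θ2 x0| := by
      rw [hθeig x0 hx0, hθ2x0]; ring
    calc α1 * |θ2 x0| = |∫ y in (-l)..l, K (x0 - y) * θ2 y| := h1
      _ ≤ ∫ y in (-l)..l, |K (x0 - y) * θ2 y| := h2
      _ = ∫ y in (-l)..l, K (x0 - y) * |θ2 y| := h3
      _ ≤ ∫ y in (-l)..l, K (x0 - y) * (M * θstar y) := h4
      _ = M * ∫ y in (-l)..l, K (x0 - y) * θstar y := h5
      _ = lamt * |θ2 x0| := h6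
  have : α1 ≤ lamt := le_of_mul_le_mul_right (by linarith [key]) hθ2x0pos
  linarith
end

section
/- Let K : ℝ → ℝ be continuous, bounded, nonnegative, symmetric, K(0)>0, ∫_ℝ K = 1, and fix l > 0. Suppose θ* is a continuous positive function on [−l,l] with ∫_{−l}^{l} K(x−y)θ*(y)dy = λ̃·θ*(x) and λ̃ > 0. If α1 > λ̃ and ξ : [−l,l] → ℝ is continuous, ξ ≥ 0, ξ ≢ 0, and satisfies ∫_{−l}^{l} K(x−y)ξ(y)dy ≤ α1·ξ(x) for all x ∈ [−l,l], then ξ(x) > 0 for all x ∈ [−l,l]. -/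
theorem stmt_4 (K : ℝ → ℝ) (hKcont : Continuous K) (hKbdd : ∃ C : ℝ, ∀ x, |K x| ≤ C)
    (hKnonneg : ∀ x, 0 ≤ K x) (hKsymm : ∀ x, K (-x) = K x) (hK0 : 0 < K 0)
    (hKint : MeasureTheory.Integrable K) (hKone : ∫ x, K x = 1)
    (l : ℝ) (hl : 0 < l)
    (θstar : ℝ → ℝ) (hθcont : ContinuousOn θstar (Set.Icc (-l) l))
    (hθpos : ∀ x ∈ Set.Icc (-l) l, 0 < θstar x)
    (lamt : ℝ) (hlamt : 0 < lamt)
    (hθeig : ∀ x ∈ Set.Icc (-l) l, ∫ y in (-l)..l, K (x - y) * θstar y = lamt * θstar x)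
    (α1 : ℝ) (hα1 : lamt < α1)
    (ξ : ℝ → ℝ) (hξcont : ContinuousOn ξ (Set.Icc (-l) l))
    (hξnonneg : ∀ x ∈ Set.Icc (-l) l, 0 ≤ ξ x)
    (hξne : ∃ x ∈ Set.Icc (-l) l, ξ x ≠ 0)
    (hξineq : ∀ x ∈ Set.Icc (-l) l, ∫ y in (-l)..l, K (x - y) * ξ y ≤ α1 * ξ x) :
    ∀ x ∈ Set.Icc (-l) l, 0 < ξ x := by
  have hll : (-l : ℝ) ≤ l := by linarith
  -- δ such that K > 0 on the δ-ball around 0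
  obtain ⟨δ, hδ, hKδ⟩ : ∃ δ > 0, ∀ t : ℝ, |t| < δ → 0 < K t := by
    have := hKcont.continuousAt (x := 0)
    rw [Metric.continuousAt_iff] at this
    obtain ⟨δ, hδ, h⟩ := this (K 0) hK0
    refine ⟨δ, hδ, fun t ht => ?_⟩
    have := h (x := t) (by simpa [Real.dist_eq] using ht)
    rw [Real.dist_eq] at this
    have := abs_lt.1 this
    linarith [this.1]
  -- key spreading lemma: a zero of ξ forces ξ to vanish nearby
  have key : ∀ x₀ ∈ Set.Icc (-l) l, ξ x₀ = 0 →
      ∀ y ∈ Set.Icc (-l) l, |x₀ - y| < δ → ξ y = 0 := by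
    intro x₀ hx₀ hx₀0 y hy hyd
    have hfc : ContinuousOn (fun y => K (x₀ - y) * ξ y) (Set.Icc (-l) l) :=
      ((hKcont.comp (continuous_const.sub continuous_id)).continuousOn).mul hξcont
    have hfnn : ∀ u ∈ Set.Icc (-l) l, 0 ≤ K (x₀ - u) * ξ u := fun u hu =>
      mul_nonneg (hKnonneg _) (hξnonneg u hu)
    have hint : IntervalIntegrable (fun y => K (x₀ - y) * ξ y) MeasureTheory.volume (-l) l :=
      (hfc.mono (by rw [Set.uIcc_of_le hll])).intervalIntegrable
    have h0 : (∫ u in (-l)..l, K (x₀ - u) * ξ u) = 0 := by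
      have h1 := hξineq x₀ hx₀
      rw [hx₀0, mul_zero] at h1
      have h2 : 0 ≤ ∫ u in (-l)..l, K (x₀ - u) * ξ u :=
        intervalIntegral.integral_nonneg hll hfnn
      linarith
    -- the integrand vanishes a.e. on Ioc, hence everywhere on Icc by continuity
    have hIoc : (∫ u in Set.Ioc (-l) l, K (x₀ - u) * ξ u) = 0 := by
      rwa [intervalIntegral.integral_of_le hll] at h0
    have hae : (fun u => K (x₀ - u) * ξ u)
        =ᵐ[MeasureTheory.volume.restrict (Set.Ioc (-l) l)] 0 := by
      have hnnae : 0 ≤ᵐ[MeasureTheory.volume.restrict (Set.Ioc (-l) l)]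
          fun u => K (x₀ - u) * ξ u := by
        refine (MeasureTheory.ae_restrict_iff' measurableSet_Ioc).2 ?_
        filter_upwards with u hu
        exact hfnn u (Set.Ioc_subset_Icc_self hu)
      have hinteg : MeasureTheory.IntegrableOn (fun u => K (x₀ - u) * ξ u)
          (Set.Ioc (-l) l) := by
        have := hint.def'
        rwa [Set.uIoc_of_le hll] at this
      exact (MeasureTheory.integral_eq_zero_iff_of_nonneg_ae hnnae hinteg).1 hIoc
    have haeIcc : (fun u => K (x₀ - u) * ξ u)
        =ᵐ[MeasureTheory.volume.restrict (Set.Icc (-l) l)] 0 := by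
      rwa [MeasureTheory.Measure.restrict_congr_set MeasureTheory.Ioc_ae_eq_Icc] at hae
    have heq : Set.EqOn (fun u => K (x₀ - u) * ξ u) 0 (Set.Icc (-l) l) :=
      MeasureTheory.Measure.eqOn_Icc_of_ae_eq MeasureTheory.volume (by linarith : (-l : ℝ) ≠ l)
        haeIcc hfc continuousOn_const
    have := heq hy
    simp only [Pi.zero_apply] at this
    have hKpos : 0 < K (x₀ - y) := hKδ _ hyd
    exact (mul_eq_zero.1 this).resolve_left (ne_of_gt hKpos)
  -- clopen argument on the connected space Icc (-l) l
  have hnozero : ∀ x ∈ Set.Icc (-l) l, ξ x ≠ 0 := by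
    by_contra h
    push_neg at h
    obtain ⟨x₀, hx₀, hx₀0⟩ := h
    haveI : ConnectedSpace (Set.Icc (-l) l) :=
      Subtype.connectedSpace (isConnected_Icc hll)
    set S : Set (Set.Icc (-l) l) := {x | ξ x.val = 0} with hS
    have hSclosed : IsClosed S := by
      have hc : Continuous fun x : Set.Icc (-l) l => ξ x.val :=
        continuousOn_iff_continuous_restrict.1 hξcont
      exact isClosed_eq hc continuous_const
    have hSopen : IsOpen S := by
      rw [Metric.isOpen_iff]
      intro x hx
      refine ⟨δ, hδ, fun y hy => ?_⟩
      have hd : |(x : ℝ) - (y : ℝ)| < δ := by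
        have := hy
        rw [Metric.mem_ball, Subtype.dist_eq, Real.dist_eq] at this
        rw [abs_sub_comm]
        exact this
      exact key x.val x.2 hx y.val y.2 hd
    have hSne : S.Nonempty := ⟨⟨x₀, hx₀⟩, hx₀0⟩
    have : S = Set.univ := IsClopen.eq_univ ⟨hSclosed, hSopen⟩ hSne
    obtain ⟨z, hz, hzne⟩ := hξne
    exact hzne (by have := this ▸ (Set.mem_univ (⟨z, hz⟩ : Set.Icc (-l) l)); exact this)
  intro x hx
  exact lt_of_le_of_ne (hξnonneg x hx) (Ne.symm (hnozero x hx))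
end

section
/- Let J : ℝ → ℝ be continuous, bounded, nonnegative, symmetric, with ∫_ℝ J = 1, and define the tent function θ_l(x) = max(l − |x|, 0). Then for every ε > 0 there exists l_ε > 0 such that for all l ≥ l_ε and all x ∈ [−l, l], ∫_{−l}^{l} J(x−y)·θ_l(y) dy − θ_l(x) > −ε·θ_l(x). -/
open MeasureTheory intervalIntegral Set Filter

section helpers
variable {J : ℝ → ℝ}

lemma my_integrand_cont (hJ : Continuous J) (l x : ℝ) :
    Continuous fun y : ℝ => J (x - y) * max (l - |y|) 0 :=
  (hJ.comp (continuous_const.sub continuous_id')).mul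
    ((continuous_const.sub continuous_abs).max continuous_const)

lemma my_mono_sub {f : ℝ → ℝ} (hf : Continuous f) (hnn : ∀ y, 0 ≤ f y)
    {a b c d : ℝ} (h1 : a ≤ c) (h2 : c ≤ d) (h3 : d ≤ b) :
    ∫ y in c..d, f y ≤ ∫ y in a..b, f y := by
  have e1 : (∫ y in a..c, f y) + ∫ y in c..b, f y = ∫ y in a..b, f y :=
    integral_add_adjacent_intervals (hf.intervalIntegrable _ _) (hf.intervalIntegrable _ _)
  have e2 : (∫ y in c..d, f y) + ∫ y in d..b, f y = ∫ y in c..b, f y :=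
    integral_add_adjacent_intervals (hf.intervalIntegrable _ _) (hf.intervalIntegrable _ _)
  have n1 : 0 ≤ ∫ y in a..c, f y := integral_nonneg h1 (fun u _ => hnn u)
  have n2 : 0 ≤ ∫ y in d..b, f y := integral_nonneg h3 (fun u _ => hnn u)
  linarith

lemma my_odd_int (hs : ∀ x, J (-x) = J x) (a : ℝ) :
    ∫ z in (-a)..a, J z * z = 0 := by
  have h := intervalIntegral.integral_comp_neg (a := -a) (b := a) (fun z => J z * z)
  simp only [neg_neg] at h
  have h2 : ∀ z : ℝ, J (-z) * (-z) = -(J z * z) := fun z => by rw [hs]; ring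
  simp only [h2, intervalIntegral.integral_neg] at h
  linarith

lemma my_even_int (hs : ∀ x, J (-x) = J x) (a b : ℝ) :
    ∫ z in a..b, J z = ∫ z in (-b)..(-a), J z := by
  rw [← intervalIntegral.integral_comp_neg (a := a) (b := b) J]
  simp only [hs]

lemma my_F_symm (hs : ∀ x, J (-x) = J x) (l x : ℝ) :
    ∫ y in (-l)..l, J (-x - y) * max (l - |y|) 0
      = ∫ y in (-l)..l, J (x - y) * max (l - |y|) 0 := by
  have h := intervalIntegral.integral_comp_neg (a := -l) (b := l)
    (fun u => J (u - x) * max (l - |u|) 0)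
  simp only [neg_neg] at h
  have e1 : ∀ y : ℝ, J (-y - x) * max (l - |(-y)|) 0 = J (-x - y) * max (l - |y|) 0 := by
    intro y
    rw [abs_neg, show -y - x = -x - y by ring]
  simp only [e1] at h
  rw [h]
  apply intervalIntegral.integral_congr
  intro u _
  have := hs (x - u)
  rw [neg_sub] at this
  simp only []
  rw [this]
end helpers

section more
variable {J : ℝ → ℝ}

lemma my_comp_step (J : ℝ → ℝ) (l x p q : ℝ) :
    ∫ z in (x - q)..(x - p), J z * max (l - |x - z|) 0
      = ∫ y in p..q, J (x - y) * max (l - |y|) 0 := by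
  have h := intervalIntegral.integral_comp_sub_left (a := p) (b := q)
    (fun u => J u * max (l - |x - u|) 0) x
  simp only [sub_sub_cancel] at h
  exact h.symm

lemma my_base (hJc : Continuous J) (hJnn : ∀ x, 0 ≤ J x)
    {R l x : ℝ} (hR : 0 < R) (hx : R ≤ x) (hxl : x ≤ l) :
    ∫ z in (-(min (l - x) R))..R, J z * ((l - x) + z) ≤
      ∫ y in (-l)..l, J (x - y) * max (l - |y|) 0 := by
  have hm0 : (0:ℝ) ≤ l - x := by linarith
  set a := min (l - x) R with ha
  have ha0 : 0 ≤ a := le_min hm0 hR.le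
  have haR : a ≤ R := min_le_right _ _
  have ham : a ≤ l - x := min_le_left _ _
  have step1 : ∫ z in (-a)..R, J z * ((l - x) + z)
      = ∫ z in (-a)..R, J z * max (l - |x - z|) 0 := by
    apply intervalIntegral.integral_congr
    intro z hz
    rw [Set.uIcc_of_le (by linarith)] at hz
    obtain ⟨hz1, hz2⟩ := hz
    have h1 : 0 ≤ x - z := by linarith
    show J z * ((l - x) + z) = J z * max (l - |x - z|) 0
    rw [abs_of_nonneg h1, max_eq_left (by linarith)]
    ring_nf
  have step2 : ∫ z in (-a)..R, J z * max (l - |x - z|) 0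
      = ∫ y in (x - R)..(x + a), J (x - y) * max (l - |y|) 0 := by
    rw [← my_comp_step J l x (x - R) (x + a), show x - (x + a) = -a by ring,
      show x - (x - R) = R by ring]
  rw [step1, step2]
  exact my_mono_sub (my_integrand_cont hJc l x)
    (fun y => mul_nonneg (hJnn _) (le_max_right _ _))
    (by linarith) (by linarith) (by linarith)

lemma my_caseA (hJc : Continuous J) (hJnn : ∀ x, 0 ≤ J x)
    {R l x : ℝ} (hR : 0 < R) (hxl : |x| ≤ l) (hm : R ≤ l - |x|) :
    (l - |x| - R) * (∫ z in (-R)..R, J z) ≤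
      ∫ y in (-l)..l, J (x - y) * max (l - |y|) 0 := by
  have h1 : (l - |x| - R) * ∫ z in (-R)..R, J z
      = ∫ z in (-R)..R, J z * (l - |x| - R) := by
    rw [intervalIntegral.integral_mul_const, mul_comm]
  have hx0 : 0 ≤ |x| := abs_nonneg x
  have h2 : ∫ z in (-R)..R, J z * (l - |x| - R)
      ≤ ∫ z in (-R)..R, J z * max (l - |x - z|) 0 := by
    apply intervalIntegral.integral_mono_on (by linarith)
      ((hJc.mul continuous_const).intervalIntegrable _ _)
      ((hJc.mul (((continuous_const.sub
        ((continuous_const.sub continuous_id').abs)).max continuous_const))).intervalIntegrable _ _)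
    intro z hz
    obtain ⟨hz1, hz2⟩ := hz
    apply mul_le_mul_of_nonneg_left _ (hJnn z)
    have habs : |x - z| ≤ |x| + |z| := abs_sub x z
    have hzabs : |z| ≤ R := abs_le.2 ⟨hz1, hz2⟩
    exact le_trans (by linarith [abs_nonneg (x - z)] : l - |x| - R ≤ l - |x - z|)
      (le_max_left _ _)
  have h3 : ∫ z in (-R)..R, J z * max (l - |x - z|) 0
      = ∫ y in (x - R)..(x + R), J (x - y) * max (l - |y|) 0 := by
    rw [← my_comp_step J l x (x - R) (x + R), show x - (x + R) = -R by ring,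
      show x - (x - R) = R by ring]
  have hxl1 : -l ≤ x - R := by
    have := neg_abs_le x
    linarith
  have hxl2 : x + R ≤ l := by
    have := le_abs_self x
    linarith
  calc (l - |x| - R) * ∫ z in (-R)..R, J z
      _ = ∫ z in (-R)..R, J z * (l - |x| - R) := h1
      _ ≤ ∫ z in (-R)..R, J z * max (l - |x - z|) 0 := h2
      _ = ∫ y in (x - R)..(x + R), J (x - y) * max (l - |y|) 0 := h3
      _ ≤ ∫ y in (-l)..l, J (x - y) * max (l - |y|) 0 :=
        my_mono_sub (my_integrand_cont hJc l x)
          (fun y => mul_nonneg (hJnn _) (le_max_right _ _))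
          hxl1 (by linarith) hxl2

end more

section low
variable {J : ℝ → ℝ}

lemma my_sym_part (hJc : Continuous J) (hs : ∀ x, J (-x) = J x) (m b : ℝ) :
    ∫ z in (-b)..b, J z * (m + z) = m * ∫ z in (-b)..b, J z := by
  have e : ∀ z : ℝ, J z * (m + z) = m * J z + J z * z := fun z => by ring
  simp only [e]
  rw [intervalIntegral.integral_add (f := fun z => m * J z) (g := fun z => J z * z) ((continuous_const.mul hJc).intervalIntegrable _ _)
    ((hJc.mul continuous_id').intervalIntegrable _ _),
    intervalIntegral.integral_const_mul, my_odd_int hs, add_zero]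

lemma my_lower1 (hJc : Continuous J) (hJnn : ∀ x, 0 ≤ J x) (hs : ∀ x, J (-x) = J x)
    {R m : ℝ} (hR : 0 < R) (hm : 0 ≤ m) :
    m * ∫ z in (-R)..R, J z ≤ ∫ z in (-(min m R))..R, J z * (m + z) := by
  rcases le_total m R with hmR | hRm
  · rw [min_eq_left hmR]
    have hint : ∀ a b : ℝ, IntervalIntegrable (fun z => J z * (m + z)) MeasureTheory.volume a b :=
      fun a b => (hJc.mul (continuous_const.add continuous_id')).intervalIntegrable _ _
    have split : (∫ z in (-m)..m, J z * (m + z)) + ∫ z in m..R, J z * (m + z)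
        = ∫ z in (-m)..R, J z * (m + z) :=
      intervalIntegral.integral_add_adjacent_intervals (hint _ _) (hint _ _)
    have h1 : ∫ z in (-m)..m, J z * (m + z) = m * ∫ z in (-m)..m, J z := my_sym_part hJc hs m m
    have h3 : ∫ z in m..R, J z * (2 * m) ≤ ∫ z in m..R, J z * (m + z) := by
      apply intervalIntegral.integral_mono_on (f := fun z => J z * (2 * m)) (g := fun z => J z * (m + z)) hmR
        ((hJc.mul continuous_const).intervalIntegrable _ _)
        ((hJc.mul (continuous_const.add continuous_id')).intervalIntegrable _ _)
      intro z hz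
      exact mul_le_mul_of_nonneg_left (by linarith [hz.1]) (hJnn z)
    have h4 : ∫ z in m..R, J z * (2 * m) = 2 * m * ∫ z in m..R, J z := by
      rw [intervalIntegral.integral_mul_const, mul_comm]
    have h5 : ∫ z in m..R, J z = ∫ z in (-R)..(-m), J z := my_even_int hs m R
    have s1 : (∫ z in (-R)..(-m), J z) + ∫ z in (-m)..m, J z = ∫ z in (-R)..m, J z :=
      intervalIntegral.integral_add_adjacent_intervals
        (hJc.intervalIntegrable _ _) (hJc.intervalIntegrable _ _)
    have s2 : (∫ z in (-R)..m, J z) + ∫ z in m..R, J z = ∫ z in (-R)..R, J z :=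
      intervalIntegral.integral_add_adjacent_intervals
        (hJc.intervalIntegrable _ _) (hJc.intervalIntegrable _ _)
    nlinarith [h1, h3, h4, h5, s1, s2, split]
  · rw [min_eq_right hRm, my_sym_part hJc hs m R]
end low

theorem stmt_5 (J : ℝ → ℝ) (hJcont : Continuous J) (hJbdd : ∃ C : ℝ, ∀ x, |J x| ≤ C)
    (hJnonneg : ∀ x, 0 ≤ J x) (hJsymm : ∀ x, J (-x) = J x)
    (hJint : MeasureTheory.Integrable J) (hJone : ∫ x, J x = 1) :
    ∀ ε > (0:ℝ), ∃ lε > (0:ℝ), ∀ l ≥ lε, ∀ x ∈ Set.Icc (-l) l,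
      (∫ y in (-l)..l, J (x - y) * max (l - |y|) 0) - max (l - |x|) 0 >
        -ε * max (l - |x|) 0 := by
  intro ε hε
  set ε' := min ε 2⁻¹ with hε'def
  have hε'pos : 0 < ε' := lt_min hε (by norm_num)
  have hε'le : ε' ≤ ε := min_le_left _ _
  have hε'half : ε' ≤ 2⁻¹ := min_le_right _ _
  -- choose R
  have hten : Tendsto (fun R : ℝ => ∫ z in (-R)..R, J z) atTop (nhds 1) := by
    have h := MeasureTheory.intervalIntegral_tendsto_integral (μ := MeasureTheory.volume)
      hJint tendsto_neg_atTop_atBot tendsto_id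
    rwa [hJone] at h
  obtain ⟨R, hR1, hRJ⟩ : ∃ R : ℝ, 1 ≤ R ∧ 1 - ε' / 2 < ∫ z in (-R)..R, J z := by
    have h1 : ∀ᶠ R : ℝ in atTop, 1 - ε' / 2 < ∫ z in (-R)..R, J z :=
      hten.eventually (eventually_gt_nhds (by linarith))
    obtain ⟨R, hR⟩ := ((eventually_ge_atTop (1:ℝ)).and h1).exists
    exact ⟨R, hR.1, hR.2⟩
  have hRpos : (0:ℝ) < R := by linarith
  -- positivity of the moment integral
  have hJhalf : 0 < ∫ z in (0:ℝ)..R, J z := by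
    have h5 : ∫ z in (0:ℝ)..R, J z = ∫ z in (-R)..(0:ℝ), J z := by
      have := my_even_int hJsymm 0 R
      simpa using this
    have hsum : (∫ z in (-R)..(0:ℝ), J z) + ∫ z in (0:ℝ)..R, J z = ∫ z in (-R)..R, J z :=
      intervalIntegral.integral_add_adjacent_intervals
        (hJcont.intervalIntegrable _ _) (hJcont.intervalIntegrable _ _)
    have : (2:ℝ)⁻¹ ≤ 1 - ε' / 2 := by
      have : ε' ≤ 2⁻¹ := hε'half
      norm_num at this ⊢
      linarith
    linarith
  have hc : 0 < ∫ z in (0:ℝ)..R, J z * z := by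
    have hmp := (intervalIntegral.integral_pos_iff_support_of_nonneg_ae
      (Filter.Eventually.of_forall hJnonneg) (hJcont.intervalIntegrable _ _)).mp hJhalf
    have hnn : (0:ℝ→ℝ) ≤ᵐ[MeasureTheory.volume.restrict (Set.uIoc (0:ℝ) R)]
        fun z => J z * z := by
      rw [Set.uIoc_of_le hRpos.le, Filter.EventuallyLE,
        MeasureTheory.ae_restrict_iff' measurableSet_Ioc]
      filter_upwards with z hz
      exact mul_nonneg (hJnonneg z) (le_of_lt hz.1)
    rw [intervalIntegral.integral_pos_iff_support_of_nonneg_ae' hnn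
      ((hJcont.mul continuous_id').intervalIntegrable _ _)]
    refine ⟨hRpos, lt_of_lt_of_le hmp.2 (MeasureTheory.measure_mono ?_)⟩
    rintro z ⟨hz1, hz2⟩
    exact ⟨mul_ne_zero hz1 (ne_of_gt hz2.1), hz2⟩
  refine ⟨2 * R / ε' + 2 * R + 1, by positivity, ?_⟩
  intro l hl x hx
  obtain ⟨hx1, hx2⟩ := hx
  have hxabs : |x| ≤ l := abs_le.2 ⟨hx1, hx2⟩
  have hlεpos : (0:ℝ) < 2 * R / ε' + 2 * R + 1 := by positivity
  have hl0 : 0 < l := lt_of_lt_of_le hlεpos hl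
  have hθ : max (l - |x|) 0 = l - |x| := max_eq_left (by linarith)
  rw [hθ]
  have hm0 : 0 ≤ l - |x| := by linarith
  by_cases hcase : 2 * R / ε' < l - |x|
  · -- far from the boundary
    have hprod : 2 * R < (l - |x|) * ε' := (div_lt_iff₀ hε'pos).mp hcase
    have hRm : R < l - |x| := by nlinarith
    have hA := my_caseA hJcont hJnonneg hRpos hxabs hRm.le
    have h2 : (l - |x| - R) * (1 - ε' / 2) < (l - |x| - R) * ∫ z in (-R)..R, J z :=
      mul_lt_mul_of_pos_left hRJ (by linarith)
    nlinarith [mul_le_mul_of_nonneg_right hε'le hm0]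
  · -- near the boundary
    push_neg at hcase
    have hxR : R ≤ |x| := by
      have hcase' : l - |x| ≤ 2 * R / ε' := hcase
      linarith
    have hIeq : (∫ y in (-l)..l, J (x - y) * max (l - |y|) 0)
        = ∫ y in (-l)..l, J (|x| - y) * max (l - |y|) 0 := by
      rcases abs_cases x with ⟨h, _⟩ | ⟨h, _⟩
      · rw [h]
      · rw [h]
        simpa using (my_F_symm hJsymm l x).symm
    rw [hIeq]
    have hbase := my_base hJcont hJnonneg hRpos hxR hxabs
    by_cases hm : l - |x| = 0
    · rw [hm]
      have hmin : min (l - |x|) R = 0 := by rw [hm]; exact min_eq_left hRpos.le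
      rw [hmin] at hbase
      simp only [neg_zero, hm, zero_add] at hbase
      simp only [mul_zero, neg_zero, sub_zero]
      exact lt_of_lt_of_le hc hbase
    · have hmpos : 0 < l - |x| := lt_of_le_of_ne hm0 (Ne.symm hm)
      have hlow := my_lower1 hJcont hJnonneg hJsymm hRpos hm0
      have h2 : (l - |x|) * (1 - ε' / 2) < (l - |x|) * ∫ z in (-R)..R, J z :=
        mul_lt_mul_of_pos_left hRJ hmpos
      nlinarith [mul_le_mul_of_nonneg_right hε'le hm0]
end
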